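/- For a real number $q$ with $q > 0$ and $q \ne 1$, and for all positive integers $n$ and $r$, $\sum_{\ell=1}^{n} q^{2n-2\ell}\, [\ell]_q\, H_{n-\ell}^{(r)}(q) = \frac{[n]_q [n+r]_q}{[r]_q [r+1]_q} H_n^{(r)}(q) - \binom{n+r}{r+1}_q \Bigl(\frac{q^{r-1}}{[r]_q} + \frac{q^{r}}{[r+1]_q} - \frac{q^{n+r-1}}{[n+r]_q}\Bigr)$. -/

import Mathlib

/-- The `q`-integer `[n]_q = (1 - q^n)/(1 - q)`. -/
noncomputable def qint (q : ℝ) (n : ℕ) : ℝ := (1 - q ^ n) / (1 - q)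

/-- The `q`-factorial `[n]_q! = [n]_q [n-1]_q ⋯ [1]_q`, with `[0]_q! = 1`. -/
noncomputable def qfact (q : ℝ) : ℕ → ℝ
  | 0 => 1
  | n + 1 => qint q (n + 1) * qfact q n

/-- The `q`-binomial coefficient `C(n,k)_q = [n]_q!/([k]_q! [n-k]_q!)`, equal to `0` for `k > n`. -/
noncomputable def qbinom (q : ℝ) (n k : ℕ) : ℝ :=
  if k ≤ n then qfact q n / (qfact q k * qfact q (n - k)) else 0

/-- The `q`-hyperharmonic numbers: `H_n^{(0)}(q) = 1/(q [n]_q)` and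
`H_n^{(r)}(q) = ∑_{j=1}^n q^j H_j^{(r-1)}(q)` for `r ≥ 1` (so `H_0^{(r)}(q) = 0`). -/
noncomputable def qhyp (q : ℝ) : ℕ → ℕ → ℝ
  | 0, n => 1 / (q * qint q n)
  | r + 1, n => ∑ j ∈ Finset.Icc 1 n, q ^ j * qhyp q r j

noncomputable def qsig (q : ℝ) (m : ℕ) : ℝ := ∑ j ∈ Finset.Icc 1 m, q ^ (j - 1) / qint q j

variable {q : ℝ}

lemma one_sub_ne (hq1 : q ≠ 1) : 1 - q ≠ 0 := sub_ne_zero.2 (Ne.symm hq1)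

lemma one_sub_pow_ne (hq : 0 < q) (hq1 : q ≠ 1) {a : ℕ} (ha : a ≠ 0) : 1 - q ^ a ≠ 0 := by
  rcases lt_or_gt_of_ne hq1 with h | h
  · have : q ^ a < 1 := pow_lt_one₀ hq.le h (by omega)
    linarith
  · have : 1 < q ^ a := one_lt_pow₀ h ha
    linarith

lemma qint_ne_zero (hq : 0 < q) (hq1 : q ≠ 1) {a : ℕ} (ha : a ≠ 0) : qint q a ≠ 0 :=
  div_ne_zero (one_sub_pow_ne hq hq1 ha) (one_sub_ne hq1)

lemma qfact_ne_zero (hq : 0 < q) (hq1 : q ≠ 1) (n : ℕ) : qfact q n ≠ 0 := by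
  induction n with
  | zero => simp [qfact]
  | succ k ih => exact mul_ne_zero (qint_ne_zero hq hq1 (by omega)) ih

lemma qbinom_eq {k m : ℕ} (h : k ≤ m) :
    qbinom q m k = qfact q m / (qfact q k * qfact q (m - k)) := if_pos h

lemma qint_zero : qint q 0 = 0 := by simp [qint]

lemma qint_succ (hq1 : q ≠ 1) (k : ℕ) : qint q (k + 1) = qint q k + q ^ k := by
  have h := one_sub_ne hq1
  simp only [qint]
  field_simp
  ring

lemma qhyp_zero (r : ℕ) : qhyp q (r + 1) 0 = 0 := by simp [qhyp]

lemma qhyp_succ (r n : ℕ) :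
    qhyp q (r + 1) (n + 1) = qhyp q (r + 1) n + q ^ (n + 1) * qhyp q r (n + 1) := by
  show (∑ j ∈ Finset.Icc 1 (n + 1), q ^ j * qhyp q r j) = _
  rw [Finset.sum_Icc_succ_top (by omega)]
  rfl

lemma qsig_zero : qsig q 0 = 0 := by simp [qsig]

lemma qsig_succ (m : ℕ) : qsig q (m + 1) = qsig q m + q ^ m / qint q (m + 1) := by
  show (∑ j ∈ Finset.Icc 1 (m + 1), q ^ (j - 1) / qint q j) = _
  rw [Finset.sum_Icc_succ_top (by omega)]
  simp [qsig]

/-- Closed form for the q-hyperharmonic numbers. -/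
lemma qhyp_closed (hq : 0 < q) (hq1 : q ≠ 1) (s : ℕ) :
    ∀ n, qhyp q (s + 1) n = qbinom q (n + s) s * (qsig q (n + s) - qsig q s) := by
  induction s with
  | zero =>
    intro n
    have h1 : qbinom q (n + 0) 0 = 1 := by
      rw [qbinom_eq (by omega)]
      simp [qfact, div_self (qfact_ne_zero hq hq1 n)]
    rw [h1, qsig_zero]
    show (∑ j ∈ Finset.Icc 1 n, q ^ j * qhyp q 0 j) = 1 * (qsig q n - 0)
    rw [one_mul, sub_zero, qsig]
    refine Finset.sum_congr rfl fun j hj => ?_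
    simp only [Finset.mem_Icc] at hj
    obtain ⟨i, rfl⟩ : ∃ i, j = i + 1 := ⟨j - 1, by omega⟩
    have hJ : qint q (i + 1) ≠ 0 := qint_ne_zero hq hq1 (by omega)
    rw [qhyp]
    simp only [Nat.add_sub_cancel]
    rw [pow_succ]
    field_simp
  | succ s ih =>
    intro n
    induction n with
    | zero =>
      rw [qhyp_zero]
      simp
    | succ n ihn =>
      rw [qhyp_succ, ihn, ih (n + 1)]
      simp only [show n + (s + 1) = n + s + 1 from by ring,
        show n + 1 + (s + 1) = n + s + 1 + 1 from by ring,
        show n + 1 + s = n + s + 1 from by ring]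
      rw [qsig_succ (n + s + 1), qsig_succ s]
      rw [qbinom_eq (show s + 1 ≤ n + s + 1 + 1 by omega),
          qbinom_eq (show s + 1 ≤ n + s + 1 by omega),
          qbinom_eq (show s ≤ n + s + 1 by omega)]
      have r1 : n + s + 1 + 1 - (s + 1) = n + 1 := by omega
      have r2 : n + s + 1 - (s + 1) = n := by omega
      have r3 : n + s + 1 - s = n + 1 := by omega
      rw [r1, r2, r3]
      rw [show qfact q (n + s + 1 + 1) = qint q (n + s + 2) * qfact q (n + s + 1) from by
            rw [show n + s + 1 + 1 = n + s + 2 from rfl]; rfl,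
          show qfact q (s + 1) = qint q (s + 1) * qfact q s from rfl,
          show qfact q (n + 1) = qint q (n + 1) * qfact q n from rfl]
      have hF1 := qfact_ne_zero hq hq1 (n + s + 1)
      have hF2 := qfact_ne_zero hq hq1 s
      have hF3 := qfact_ne_zero hq hq1 n
      have h1 := one_sub_ne hq1
      have h2 := one_sub_pow_ne hq hq1 (show n + s + 2 ≠ 0 by omega)
      have h3 := one_sub_pow_ne hq hq1 (show s + 1 ≠ 0 by omega)
      have h4 := one_sub_pow_ne hq hq1 (show n + 1 ≠ 0 by omega)
      simp only [qint]
      field_simp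
      ring

/-- The backward sum equals a higher-order q-hyperharmonic number. -/
lemma key_sum (hq : 0 < q) (hq1 : q ≠ 1) (r : ℕ) :
    ∀ n, ∑ m ∈ Finset.range n, q ^ (2 * m) * qint q (n - m) * qhyp q (r + 1) m =
      qhyp q (r + 3) (n - 1) := by
  intro n
  induction n with
  | zero => simp [qhyp_zero]
  | succ n ih =>
    have step : ∀ m ∈ Finset.range (n + 1),
        q ^ (2 * m) * qint q (n + 1 - m) * qhyp q (r + 1) m =
          q ^ (2 * m) * qint q (n - m) * qhyp q (r + 1) m
            + q ^ n * (q ^ m * qhyp q (r + 1) m) := by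
      intro m hm
      simp only [Finset.mem_range] at hm
      have h1 : n + 1 - m = (n - m) + 1 := by omega
      rw [h1, qint_succ hq1]
      have h2 : q ^ (2 * m) * q ^ (n - m) = q ^ n * q ^ m := by
        rw [← pow_add, ← pow_add]
        congr 1
        omega
      linear_combination qhyp q (r + 1) m * h2
    calc ∑ m ∈ Finset.range (n + 1),
          q ^ (2 * m) * qint q (n + 1 - m) * qhyp q (r + 1) m
        = ∑ m ∈ Finset.range (n + 1),
            (q ^ (2 * m) * qint q (n - m) * qhyp q (r + 1) m
              + q ^ n * (q ^ m * qhyp q (r + 1) m)) := Finset.sum_congr rfl step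
      _ = (∑ m ∈ Finset.range (n + 1), q ^ (2 * m) * qint q (n - m) * qhyp q (r + 1) m)
            + ∑ m ∈ Finset.range (n + 1), q ^ n * (q ^ m * qhyp q (r + 1) m) :=
          Finset.sum_add_distrib
      _ = qhyp q (r + 3) (n - 1) + q ^ n * qhyp q (r + 2) n := by
          congr 1
          · rw [Finset.sum_range_succ, show n - n = 0 from by omega, qint_zero]
            rw [mul_zero, zero_mul, add_zero, ih]
          · rw [← Finset.mul_sum]
            congr 1
            rw [show qhyp q (r + 2) n = ∑ j ∈ Finset.Icc 1 n, q ^ j * qhyp q (r + 1) j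
                  from rfl]
            refine (Finset.sum_subset (fun x hx => ?_) (fun x hx hnx => ?_)).symm
            · simp only [Finset.mem_Icc] at hx; simp only [Finset.mem_range]; omega
            · simp only [Finset.mem_range] at hx
              simp only [Finset.mem_Icc] at hnx
              have : x = 0 := by omega
              subst this
              rw [show qhyp q (r + 1) 0 = 0 from qhyp_zero r, mul_zero]
      _ = qhyp q (r + 3) n := by
          cases n with
          | zero => simp [qhyp_zero]
          | succ k =>
            rw [show k + 1 - 1 = k from by omega, qhyp_succ (r + 2) k]

lemma reindex (r n : ℕ) :
    ∑ ℓ ∈ Finset.Icc 1 n, q ^ (2 * n - 2 * ℓ) * qint q ℓ * qhyp q (r + 1) (n - ℓ) =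
      ∑ m ∈ Finset.range n, q ^ (2 * m) * qint q (n - m) * qhyp q (r + 1) m := by
  refine Finset.sum_nbij' (fun ℓ => n - ℓ) (fun m => n - m) ?_ ?_ ?_ ?_ ?_
  · intro a ha; simp only [Finset.mem_Icc] at ha; simp only [Finset.mem_range]; omega
  · intro a ha; simp only [Finset.mem_range] at ha; simp only [Finset.mem_Icc]; omega
  · intro a ha; simp only [Finset.mem_Icc] at ha; show n - (n - a) = a; omega
  · intro a ha; simp only [Finset.mem_range] at ha; show n - (n - a) = a; omega
  · intro a ha
    simp only [Finset.mem_Icc] at ha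
    rw [show 2 * n - 2 * a = 2 * (n - a) from by omega,
        show n - (n - a) = a from by omega]

/-- For `q > 0`, `q ≠ 1` and positive integers `n, r`,
`∑_{ℓ=1}^n q^{2n-2ℓ} [ℓ]_q H_{n-ℓ}^{(r)}(q)
   = ([n]_q [n+r]_q / ([r]_q [r+1]_q)) H_n^{(r)}(q)
     - C(n+r, r+1)_q (q^{r-1}/[r]_q + q^r/[r+1]_q - q^{n+r-1}/[n+r]_q)`. -/
theorem sum_backward_qint_mul_qhyp (q : ℝ) (hq : 0 < q) (hq1 : q ≠ 1) (n r : ℕ)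
    (hn : 1 ≤ n) (hr : 1 ≤ r) :
    ∑ ℓ ∈ Finset.Icc 1 n, q ^ (2 * n - 2 * ℓ) * qint q ℓ * qhyp q r (n - ℓ) =
      qint q n * qint q (n + r) / (qint q r * qint q (r + 1)) * qhyp q r n -
        qbinom q (n + r) (r + 1) *
          (q ^ (r - 1) / qint q r + q ^ r / qint q (r + 1) -
            q ^ (n + r - 1) / qint q (n + r)) := by
  obtain ⟨N, rfl⟩ : ∃ N, n = N + 1 := ⟨n - 1, by omega⟩
  obtain ⟨R, rfl⟩ : ∃ R, r = R + 1 := ⟨r - 1, by omega⟩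
  rw [reindex, key_sum hq hq1]
  simp only [show N + 1 - 1 = N from rfl, show R + 1 - 1 = R from rfl,
    show N + 1 + (R + 1) = N + R + 2 from by ring,
    show N + 1 + (R + 1) - 1 = N + R + 1 from by omega,
    show R + 1 + 1 = R + 2 from rfl]
  rw [show qhyp q (R + 3) N = qhyp q ((R + 2) + 1) N from rfl, qhyp_closed hq hq1 (R + 2) N,
      show qhyp q (R + 1) (N + 1) = qhyp q (R + 1) (N + 1) from rfl,
      qhyp_closed hq hq1 R (N + 1)]
  simp only [show N + (R + 2) = N + R + 2 from by ring,
    show N + 1 + R = N + R + 1 from by ring]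
  rw [qbinom_eq (show R + 2 ≤ N + R + 2 from by omega),
      qbinom_eq (show R ≤ N + R + 1 from by omega),
      show N + R + 2 - (R + 2) = N from by omega,
      show N + R + 1 - R = N + 1 from by omega]
  rw [show qsig q (N + R + 2) = qsig q ((N + R + 1) + 1) from rfl, qsig_succ (N + R + 1),
      show qsig q (R + 2) = qsig q ((R + 1) + 1) from rfl, qsig_succ (R + 1), qsig_succ R]
  rw [show qfact q (N + R + 2) = qint q (N + R + 2) * qfact q (N + R + 1) from rfl,
      show qfact q (R + 2) = qint q (R + 2) * (qint q (R + 1) * qfact q R) from rfl,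
      show qfact q (N + 1) = qint q (N + 1) * qfact q N from rfl,
      show N + R + 1 + 1 = N + R + 2 from rfl]
  have hF1 := qfact_ne_zero hq hq1 (N + R + 1)
  have hF2 := qfact_ne_zero hq hq1 R
  have hF3 := qfact_ne_zero hq hq1 N
  have h1 := qint_ne_zero hq hq1 (show N + R + 2 ≠ 0 from by omega)
  have h2 := qint_ne_zero hq hq1 (show R + 2 ≠ 0 from by omega)
  have h3 := qint_ne_zero hq hq1 (show R + 1 ≠ 0 from by omega)
  have h4 := qint_ne_zero hq hq1 (show N + 1 ≠ 0 from by omega)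
  field_simp
  rw [show N + R + 2 - 1 = N + R + 1 from by omega]
  ring
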